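/- Let N : ℝⁿ → ℝ^p and let [ξ, ξ̄] ⊆ ℝⁿ be an interval for which there are C ∈ ℝ^{p×n} and d, d̄ ∈ ℝ^p with C x + d ≤ N(x) ≤ C x + d̄ for every x ∈ [ξ, ξ̄]. Write C⁺ for the entrywise positive part of C (C⁺_{ij} = max(C_{ij}, 0)) and C⁻ = C − C⁺. Then for every interval [a, b] ⊆ [ξ, ξ̄] and every x ∈ [a, b]: C⁺ a + C⁻ b + d ≤ N(x) ≤ C⁻ a + C⁺ b + d̄. In particular, the pair (a,b) ↦ (C⁺a + C⁻b + d, C⁻a + C⁺b + d̄) is a [ξ,ξ̄]-localized inclusion function for N. -/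

import Mathlib

open Set

/-- If `C x + dl ≤ N(x) ≤ C x + du` on `[ξl, ξu]`, then splitting
`C = C⁺ + C⁻` into positive and negative parts yields, on every subinterval `[a,b] ⊆ [ξl,ξu]`,
the bounds `C⁺a + C⁻b + dl ≤ N(x) ≤ C⁻a + C⁺b + du`; i.e. a `[ξl,ξu]`-localized inclusion
function for `N`. -/
theorem affine_bounds_give_localized_inclusion {n p : ℕ}
    (N : (Fin n → ℝ) → (Fin p → ℝ))
    (ξl ξu : Fin n → ℝ) (hξ : ξl ≤ ξu)
    (C : Matrix (Fin p) (Fin n) ℝ) (dl du : Fin p → ℝ)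
    (hbound : ∀ x ∈ Icc ξl ξu, C.mulVec x + dl ≤ N x ∧ N x ≤ C.mulVec x + du)
    (Cpos Cneg : Matrix (Fin p) (Fin n) ℝ)
    (hCpos : ∀ i j, Cpos i j = max (C i j) 0)
    (hCneg : Cneg = C - Cpos)
    (a b : Fin n → ℝ) (hab : a ≤ b) (hsub : Icc a b ⊆ Icc ξl ξu)
    (x : Fin n → ℝ) (hx : x ∈ Icc a b) :
    Cpos.mulVec a + Cneg.mulVec b + dl ≤ N x ∧
      N x ≤ Cneg.mulVec a + Cpos.mulVec b + du := by
  have hxξ := hsub hx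
  obtain ⟨hax, hxb⟩ := hx
  obtain ⟨hl, hu⟩ := hbound x hxξ
  have hCsplit : ∀ i j, C i j = Cpos i j + Cneg i j := by
    intro i j; rw [hCneg]; simp [Matrix.sub_apply]
  have hCposnn : ∀ i j, 0 ≤ Cpos i j := by
    intro i j; rw [hCpos]; exact le_max_right _ _
  have hCnegnp : ∀ i j, Cneg i j ≤ 0 := by
    intro i j
    rw [hCneg]
    simp only [Matrix.sub_apply, hCpos, sub_nonpos]
    exact le_max_left _ _
  have key1 : Cpos.mulVec a + Cneg.mulVec b ≤ C.mulVec x := by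
    intro i
    simp only [Pi.add_apply, Matrix.mulVec, dotProduct]
    rw [← Finset.sum_add_distrib]
    apply Finset.sum_le_sum
    intro j _
    rw [hCsplit i j, add_mul]
    exact add_le_add (mul_le_mul_of_nonneg_left (hax j) (hCposnn i j))
      (mul_le_mul_of_nonpos_left (hxb j) (hCnegnp i j))
  have key2 : C.mulVec x ≤ Cneg.mulVec a + Cpos.mulVec b := by
    intro i
    simp only [Pi.add_apply, Matrix.mulVec, dotProduct]
    rw [← Finset.sum_add_distrib]
    apply Finset.sum_le_sum
    intro j _
    rw [hCsplit i j, add_mul]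
    rw [add_comm (Cneg i j * a j)]
    exact add_le_add (mul_le_mul_of_nonneg_left (hxb j) (hCposnn i j))
      (mul_le_mul_of_nonpos_left (hax j) (hCnegnp i j))
  constructor
  · exact le_trans (add_le_add_left key1 dl) hl
  · exact le_trans hu (add_le_add_left key2 du)
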